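/- Let T > 0. There exist constants C > 0 and c > 0, depending only on T, such that for every bounded Borel measurable ψ : [0,T] → ℝ, the spatial derivative of the boundary-driven heat solution u(t,x) = −2∫₀ᵗ ∂ₓG(t−τ, x) ψ(τ) dτ satisfies |∂ₓu(t,x)| ≤ C(x^{−1} 1_{x≤1} + e^{−cx} 1_{x>1}) · sup_{[0,T]}|ψ| for all t ∈ (0,T] and x > 0. -/

import Mathlib

/-- The spatial derivative of the heat kernel,
`∂ₓG(t,x) = −(1/(4√π)) t^{−3/2} x exp(−x²/(4t))`. -/
noncomputable def heatGx (t x : ℝ) : ℝ :=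
  -(1 / (4 * Real.sqrt Real.pi)) * t ^ (-(3 : ℝ) / 2) * x * Real.exp (-(x ^ 2) / (4 * t))

/-- The boundary-driven heat solution `u(t,x) = −2∫₀ᵗ ∂ₓG(t−τ, x) ψ(τ) dτ`. -/
noncomputable def heatU (ψ : ℝ → ℝ) (t x : ℝ) : ℝ :=
  -2 * ∫ τ in (0 : ℝ)..t, heatGx (t - τ) x * ψ τ

open MeasureTheory Set

set_option maxHeartbeats 1000000

lemma exp_neg_le_aux {u : ℝ} (hu : 0 < u) : Real.exp (-u) ≤ 4 / u ^ 2 := by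
  have h2 : Real.exp (u/2) * Real.exp (u/2) = Real.exp u := by
    rw [← Real.exp_add]; ring_nf
  have h : u ^ 2 ≤ 4 * Real.exp u := by
    nlinarith [Real.add_one_le_exp (u/2), hu.le]
  rw [Real.exp_neg, inv_eq_one_div, div_le_div_iff₀ (Real.exp_pos u) (by positivity)]
  linarith

lemma one_add_half_le_aux {a : ℝ} (ha : 0 ≤ a) : 1 + a/2 ≤ 4 * Real.exp (a/8) := by
  have h2 : Real.exp (a/16) * Real.exp (a/16) = Real.exp (a/8) := by
    rw [← Real.exp_add]; ring_nf
  nlinarith [Real.add_one_le_exp (a/16), ha]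

lemma integrableOn_of_bdd {f : ℝ → ℝ} {a b K : ℝ} (hm : Measurable f)
    (hK : ∀ s ∈ Set.Ioc a b, |f s| ≤ K) : MeasureTheory.IntegrableOn f (Set.Ioc a b) := by
  refine MeasureTheory.Integrable.mono' (g := fun _ => K)
    (MeasureTheory.integrableOn_const measure_Ioc_lt_top.ne)
    hm.aestronglyMeasurable.restrict ?_
  filter_upwards [MeasureTheory.ae_restrict_mem measurableSet_Ioc] with s hs
  simpa using hK s hs

lemma f_le_const_aux {b s t : ℝ} (hb : 0 < b) (hs : 0 ≤ s) (hst : s ≤ t) :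
    s ^ (-(3:ℝ)/2) * Real.exp (-b/s) ≤ 4 * Real.sqrt t / b ^ 2 := by
  rcases eq_or_lt_of_le hs with h0 | h0
  · rw [← h0, Real.zero_rpow (by norm_num), zero_mul]
    have : (0:ℝ) ≤ t := le_trans hs hst
    positivity
  · have h1 : Real.exp (-b/s) ≤ 4 * s^2 / b^2 := by
      calc Real.exp (-b/s) = Real.exp (-(b/s)) := by rw [neg_div]
        _ ≤ 4/(b/s)^2 := exp_neg_le_aux (by positivity)
        _ = 4 * s^2/b^2 := by field_simp
    have h2 : s ^ (-(3:ℝ)/2) * s ^ 2 = Real.sqrt s := by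
      rw [Real.sqrt_eq_rpow, ← Real.rpow_natCast s 2, ← Real.rpow_add h0]
      norm_num
    have h3 : (0:ℝ) < s ^ (-(3:ℝ)/2) := Real.rpow_pos_of_pos h0 _
    calc s ^ (-(3:ℝ)/2) * Real.exp (-b/s) ≤ s ^ (-(3:ℝ)/2) * (4 * s^2/b^2) := by
          exact mul_le_mul_of_nonneg_left h1 h3.le
      _ = 4 * (s ^ (-(3:ℝ)/2) * s^2) / b^2 := by ring
      _ = 4 * Real.sqrt s / b^2 := by rw [h2]
      _ ≤ 4 * Real.sqrt t / b^2 := by gcongr <;> exact Real.sqrt_le_sqrt hst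

lemma measurable_faux (b : ℝ) : Measurable (fun s : ℝ => s ^ (-(3:ℝ)/2) * Real.exp (-b/s)) :=
  (measurable_id.pow_const _).mul
    (Measurable.exp ((measurable_const (a := -b)).div measurable_id))

lemma integrableOn_faux {b t : ℝ} (hb : 0 < b) (ht : 0 < t) :
    IntegrableOn (fun s : ℝ => s ^ (-(3:ℝ)/2) * Real.exp (-b/s)) (Set.Ioc 0 t) := by
  refine integrableOn_of_bdd (measurable_faux b) (K := 4 * Real.sqrt t / b ^ 2) ?_
  intro s hs
  rw [abs_of_nonneg (mul_nonneg (Real.rpow_nonneg hs.1.le _) (Real.exp_nonneg _))]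
  exact f_le_const_aux hb hs.1.le hs.2

lemma rpow_neg_three_half {s : ℝ} (h0 : 0 < s) :
    s ^ (-(3:ℝ)/2) = Real.sqrt s / s ^ 2 := by
  rw [eq_div_iff (by positivity), Real.sqrt_eq_rpow, ← Real.rpow_natCast s 2,
    ← Real.rpow_add h0]
  norm_num

/-- first piece: `∫_{(0,m]} s^{-3/2} e^{-b/s} ≤ 4/√b` when `m ≤ b`. -/
lemma piece1 {b m : ℝ} (hb : 0 < b) (hm : 0 < m) (hmb : m ≤ b) :
    ∫ s in Set.Ioc 0 m, s ^ (-(3:ℝ)/2) * Real.exp (-b/s) ≤ 4 / Real.sqrt b := by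
  set G : ℝ → ℝ := fun s => if s ≤ 0 then 0 else Real.exp (-b/(4*s)) with hGdef
  set φ : ℝ → ℝ := fun s => b/(4*s^2) * Real.exp (-b/(4*s)) with hφdef
  have hb' : (0:ℝ) < Real.sqrt b := Real.sqrt_pos.2 hb
  have hφ_nonneg : ∀ s, 0 ≤ φ s := fun s => by
    have : (0:ℝ) ≤ b/(4*s^2) := by positivity
    exact mul_nonneg this (Real.exp_nonneg _)
  have hφ_meas : Measurable φ :=
    (measurable_const.div ((measurable_id.pow_const 2).const_mul 4)).mul
      (Measurable.exp ((measurable_const (a := -b)).div (measurable_id.const_mul 4)))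
  have hφ_bdd : ∀ s ∈ Set.Ioc (0:ℝ) m, |φ s| ≤ 16 / b := by
    intro s hs
    have hs0 : 0 < s := hs.1
    rw [abs_of_nonneg (hφ_nonneg s)]
    have h1 : Real.exp (-b/(4*s)) ≤ 4/(b/(4*s))^2 := by
      calc Real.exp (-b/(4*s)) = Real.exp (-(b/(4*s))) := by rw [neg_div]
        _ ≤ _ := exp_neg_le_aux (by positivity)
    calc φ s ≤ b/(4*s^2) * (4/(b/(4*s))^2) :=
          mul_le_mul_of_nonneg_left h1 (by positivity)
      _ = 16 / b := by field_simp; ring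
  have hφ_int : IntegrableOn φ (Set.Ioc 0 m) := integrableOn_of_bdd hφ_meas hφ_bdd
  have hφ_ii : IntervalIntegrable φ volume 0 m :=
    (intervalIntegrable_iff_integrableOn_Ioc_of_le hm.le).2 hφ_int
  -- continuity of G on [0, m]
  have hG_cont : ContinuousOn G (Set.Icc 0 m) := by
    intro s hs
    rcases eq_or_lt_of_le hs.1 with h0 | h0
    · rw [ContinuousWithinAt, ← h0, show G 0 = 0 by simp [hGdef]]
      apply squeeze_zero' (f := G) (g := fun y => 64 * y^2 / b^2)
      · filter_upwards [self_mem_nhdsWithin] with y _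
        by_cases hy : y ≤ 0
        · simp [hGdef, hy]
        · simp only [hGdef, if_neg hy]
          exact Real.exp_nonneg _
      · filter_upwards [self_mem_nhdsWithin] with y hy
        by_cases hy0 : y ≤ 0
        · simp only [hGdef, if_pos hy0]
          positivity
        · push_neg at hy0
          simp only [hGdef, if_neg (not_le.2 hy0)]
          calc Real.exp (-b/(4*y)) = Real.exp (-(b/(4*y))) := by rw [neg_div]
            _ ≤ 4/(b/(4*y))^2 := exp_neg_le_aux (by positivity)
            _ = 64 * y^2 / b^2 := by field_simp; ring
      · have hco : Continuous (fun y : ℝ => 64 * y^2 / b^2) := by fun_prop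
        exact (hco.tendsto' 0 0 (by norm_num)).mono_left nhdsWithin_le_nhds
    · have hev : G =ᶠ[nhds s] (fun y : ℝ => Real.exp (-b/(4*y))) := by
        filter_upwards [eventually_gt_nhds h0] with y hy
        simp [hGdef, not_le.2 hy]
      have hc : ContinuousAt (fun y : ℝ => Real.exp (-b/(4*y))) s := by
        have h4s : (4:ℝ) * s ≠ 0 := by positivity
        exact ContinuousAt.rexp (continuousAt_const.div (by fun_prop) h4s)
      exact (hc.congr hev.symm).continuousWithinAt
  -- derivative of G on (0, m)
  have hG_deriv : ∀ s ∈ Set.Ioo (0:ℝ) m, HasDerivWithinAt G (φ s) (Set.Ioi s) s := by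
    intro s hs
    have hs0 : 0 < s := hs.1
    have h1 : HasDerivAt (fun y : ℝ => -b/(4*y)) (b/(4*s^2)) s := by
      have h := (hasDerivAt_inv hs0.ne').const_mul (-b/4)
      have hfe : (fun y : ℝ => -b/4 * y⁻¹) = fun y : ℝ => -b/(4*y) := by
        funext y; ring
      rw [hfe] at h
      refine h.congr_deriv ?_
      field_simp
    have h2 := h1.exp
    have hev : (fun y : ℝ => Real.exp (-b/(4*y))) =ᶠ[nhds s] G := by
      filter_upwards [eventually_gt_nhds hs0] with y hy
      simp [hGdef, not_le.2 hy]
    have h3 : HasDerivAt G (Real.exp (-b/(4*s)) * (b/(4*s^2))) s :=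
      h2.congr_of_eventuallyEq hev.symm
    have : φ s = Real.exp (-b/(4*s)) * (b/(4*s^2)) := mul_comm _ _
    rw [this]
    exact h3.hasDerivWithinAt
  have hFTC : ∫ s in (0:ℝ)..m, φ s = G m - G 0 :=
    intervalIntegral.integral_eq_sub_of_hasDeriv_right_of_le hm.le hG_cont hG_deriv hφ_ii
  have h_ii_f : IntervalIntegrable (fun s : ℝ => s ^ (-(3:ℝ)/2) * Real.exp (-b/s)) volume 0 m :=
    (intervalIntegrable_iff_integrableOn_Ioc_of_le hm.le).2 (integrableOn_faux hb hm)
  have hmono : ∀ s ∈ Set.Icc (0:ℝ) m,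
      s ^ (-(3:ℝ)/2) * Real.exp (-b/s) ≤ (4/Real.sqrt b) * φ s := by
    intro s hs
    rcases eq_or_lt_of_le hs.1 with h0 | h0
    · rw [← h0]
      have : (0:ℝ) ^ (-(3:ℝ)/2) = 0 := Real.zero_rpow (by norm_num)
      rw [this, zero_mul]
      exact mul_nonneg (by positivity) (hφ_nonneg 0)
    · have hsb : Real.sqrt s ≤ Real.sqrt b := Real.sqrt_le_sqrt (hs.2.trans hmb)
      have e1 : Real.exp (-b/s) ≤ Real.exp (-b/(4*s)) := by
        apply Real.exp_le_exp.2
        rw [neg_div, neg_div, neg_le_neg_iff]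
        apply div_le_div_of_nonneg_left hb.le h0
        linarith
      have hrhs : (4/Real.sqrt b) * φ s = (Real.sqrt b / s^2) * Real.exp (-b/(4*s)) := by
        rw [hφdef]
        have : 4 / Real.sqrt b * (b / (4 * s ^ 2)) = Real.sqrt b / s^2 := by
          rw [div_mul_div_comm, div_eq_div_iff (by positivity) (by positivity)]
          nlinarith [Real.mul_self_sqrt hb.le]
        rw [← mul_assoc, this]
      rw [hrhs, rpow_neg_three_half h0]
      apply mul_le_mul (by gcongr) e1 (Real.exp_nonneg _)
      positivity
  rw [← intervalIntegral.integral_of_le hm.le]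
  calc (∫ s in (0:ℝ)..m, s ^ (-(3:ℝ)/2) * Real.exp (-b/s))
      ≤ ∫ s in (0:ℝ)..m, (4/Real.sqrt b) * φ s :=
        intervalIntegral.integral_mono_on hm.le h_ii_f (hφ_ii.const_mul _) hmono
    _ = (4/Real.sqrt b) * ∫ s in (0:ℝ)..m, φ s := intervalIntegral.integral_const_mul _ _
    _ = (4/Real.sqrt b) * (G m - G 0) := by rw [hFTC]
    _ ≤ (4/Real.sqrt b) * 1 := by
        apply mul_le_mul_of_nonneg_left _ (by positivity)
        have hGm : G m ≤ 1 := by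
          simp only [hGdef, if_neg (not_le.2 hm)]
          apply Real.exp_le_one_iff.2
          rw [neg_div]
          simp only [Left.neg_nonpos_iff]
          positivity
        have hG0 : G 0 = 0 := by simp [hGdef]
        linarith
    _ = 4/Real.sqrt b := mul_one _

lemma piece2 {b t : ℝ} (hb : 0 < b) (hbt : b ≤ t) :
    ∫ s in Set.Ioc b t, s ^ (-(3:ℝ)/2) * Real.exp (-b/s) ≤ 2 / Real.sqrt b := by
  have hcont32 : ContinuousOn (fun s : ℝ => s ^ (-(3:ℝ)/2)) (Set.Icc b t) := by
    intro s hs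
    exact (Real.continuousAt_rpow_const s _ (Or.inl (lt_of_lt_of_le hb hs.1).ne')).continuousWithinAt
  have hcontf : ContinuousOn (fun s : ℝ => s ^ (-(3:ℝ)/2) * Real.exp (-b/s)) (Set.Icc b t) := by
    apply hcont32.mul
    intro s hs
    have hs0 : s ≠ 0 := (lt_of_lt_of_le hb hs.1).ne'
    exact (ContinuousAt.rexp (continuousAt_const.div continuousAt_id hs0)).continuousWithinAt
  have huIcc : Set.uIcc b t = Set.Icc b t := Set.uIcc_of_le hbt
  have h_ii32 : IntervalIntegrable (fun s : ℝ => s ^ (-(3:ℝ)/2)) volume b t :=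
    (hcont32.mono (by rw [huIcc])).intervalIntegrable
  have h_iif : IntervalIntegrable (fun s : ℝ => s ^ (-(3:ℝ)/2) * Real.exp (-b/s)) volume b t :=
    (hcontf.mono (by rw [huIcc])).intervalIntegrable
  have hderiv : ∀ s ∈ Set.uIcc b t,
      HasDerivAt (fun y : ℝ => -2 * y ^ (-(1:ℝ)/2)) (s ^ (-(3:ℝ)/2)) s := by
    intro s hs
    rw [huIcc] at hs
    have hs0 : s ≠ 0 := (lt_of_lt_of_le hb hs.1).ne'
    have h := (Real.hasDerivAt_rpow_const (p := -(1:ℝ)/2) (Or.inl hs0)).const_mul (-2 : ℝ)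
    refine h.congr_deriv ?_
    rw [show -(1:ℝ)/2 - 1 = -(3:ℝ)/2 by norm_num]
    ring
  have hFTC := intervalIntegral.integral_eq_sub_of_hasDerivAt hderiv h_ii32
  have hmono : ∀ s ∈ Set.Icc b t,
      s ^ (-(3:ℝ)/2) * Real.exp (-b/s) ≤ s ^ (-(3:ℝ)/2) := by
    intro s hs
    have hs0 : 0 < s := lt_of_lt_of_le hb hs.1
    apply mul_le_of_le_one_right (Real.rpow_nonneg hs0.le _)
    apply Real.exp_le_one_iff.2
    rw [neg_div]
    simp only [Left.neg_nonpos_iff]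
    positivity
  have hhalf : b ^ (-(1:ℝ)/2) = 1 / Real.sqrt b := by
    rw [show -(1:ℝ)/2 = -(1/2 : ℝ) by norm_num, Real.rpow_neg hb.le,
      ← Real.sqrt_eq_rpow, one_div]
  have ht0 : 0 < t := lt_of_lt_of_le hb hbt
  rw [← intervalIntegral.integral_of_le hbt]
  calc (∫ s in b..t, s ^ (-(3:ℝ)/2) * Real.exp (-b/s))
      ≤ ∫ s in b..t, s ^ (-(3:ℝ)/2) :=
        intervalIntegral.integral_mono_on hbt h_iif h_ii32 hmono
    _ = -2 * t ^ (-(1:ℝ)/2) - -2 * b ^ (-(1:ℝ)/2) := hFTC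
    _ ≤ 2 * b ^ (-(1:ℝ)/2) := by
        have : 0 ≤ t ^ (-(1:ℝ)/2) := Real.rpow_nonneg ht0.le _
        linarith
    _ = 2 / Real.sqrt b := by rw [hhalf]; ring

lemma key_int {b t : ℝ} (hb : 0 < b) (ht : 0 < t) :
    ∫ s in Set.Ioc 0 t, s ^ (-(3:ℝ)/2) * Real.exp (-b/s) ≤ 6 / Real.sqrt b := by
  have hb' : (0:ℝ) < Real.sqrt b := Real.sqrt_pos.2 hb
  rcases le_or_gt t b with h | h
  · refine (piece1 hb ht h).trans ?_
    gcongr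
    norm_num
  · have hsplit : (∫ s in Set.Ioc (0:ℝ) b, s ^ (-(3:ℝ)/2) * Real.exp (-b/s))
        + (∫ s in Set.Ioc b t, s ^ (-(3:ℝ)/2) * Real.exp (-b/s))
        = ∫ s in Set.Ioc (0:ℝ) t, s ^ (-(3:ℝ)/2) * Real.exp (-b/s) := by
      rw [← MeasureTheory.setIntegral_union (Set.Ioc_disjoint_Ioc_of_le le_rfl) measurableSet_Ioc
        (integrableOn_faux hb hb) ((integrableOn_faux hb ht).mono_set
          (Set.Ioc_subset_Ioc_left hb.le)),
        Set.Ioc_union_Ioc_eq_Ioc hb.le h.le]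
    have h1 := piece1 hb hb (le_refl b)
    have h2 := piece2 hb h.le
    rw [← hsplit]
    have : 4 / Real.sqrt b + 2 / Real.sqrt b = 6 / Real.sqrt b := by ring
    linarith

/-- `∂ₓ∂ₓG(s,y)`. -/
noncomputable def heatGxx (s y : ℝ) : ℝ :=
  -(1 / (4 * Real.sqrt Real.pi)) * s ^ (-(3:ℝ)/2) * Real.exp (-(y^2)/(4*s)) * (1 - y^2/(2*s))

lemma hasDerivAt_heatGx {s : ℝ} (hs : s ≠ 0) (y : ℝ) :
    HasDerivAt (fun z => heatGx s z) (heatGxx s y) y := by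
  set A : ℝ := -(1 / (4 * Real.sqrt Real.pi)) * s ^ (-(3:ℝ)/2) with hA
  have h1 : HasDerivAt (fun z : ℝ => -(z^2)/(4*s)) (-(2*y)/(4*s)) y := by
    have h := ((hasDerivAt_pow 2 y).neg).div_const (4*s)
    refine h.congr_deriv ?_
    simp
  have h2 := h1.exp
  have h3 := (hasDerivAt_id y).mul h2
  have h4 := h3.const_mul A
  have hfe : (fun z => heatGx s z) = fun z : ℝ => A * (z * Real.exp (-(z^2)/(4*s))) := by
    funext z
    rw [heatGx, hA]; ring
  rw [hfe]
  refine h4.congr_deriv ?_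
  rw [heatGxx, hA]
  simp only [id]
  field_simp
  ring

lemma heatGxx_abs_le {s y : ℝ} (hs : 0 < s) :
    |heatGxx s y| ≤ (Real.sqrt Real.pi)⁻¹ * (s ^ (-(3:ℝ)/2) * Real.exp (-(y^2/8)/s)) := by
  have hπ : (0:ℝ) < Real.sqrt Real.pi := Real.sqrt_pos.2 Real.pi_pos
  have hrp : (0:ℝ) < s ^ (-(3:ℝ)/2) := Real.rpow_pos_of_pos hs _
  set a : ℝ := y^2/s with hadef
  have ha : 0 ≤ a := by positivity
  have e1 : -(y^2)/(4*s) = -(a/4) := by rw [hadef]; ring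
  have e2 : y^2/(2*s) = a/2 := by rw [hadef]; ring
  have e3 : -(y^2/8)/s = -(a/8) := by rw [hadef]; ring
  rw [heatGxx, e1, e2, e3]
  rw [abs_mul, abs_mul, abs_mul, abs_neg,
    abs_of_nonneg (by positivity : (0:ℝ) ≤ 1 / (4 * Real.sqrt Real.pi)),
    abs_of_pos hrp, abs_of_pos (Real.exp_pos _)]
  have habs : |1 - a/2| ≤ 4 * Real.exp (a/8) :=
    le_trans (abs_le.2 ⟨by linarith, by linarith⟩) (one_add_half_le_aux ha)
  calc 1 / (4 * Real.sqrt Real.pi) * s ^ (-(3:ℝ)/2) * Real.exp (-(a/4)) * |1 - a/2|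
      ≤ 1 / (4 * Real.sqrt Real.pi) * s ^ (-(3:ℝ)/2) * Real.exp (-(a/4)) * (4 * Real.exp (a/8)) := by
        gcongr
    _ = (Real.sqrt Real.pi)⁻¹ * (s ^ (-(3:ℝ)/2) * (Real.exp (-(a/4)) * Real.exp (a/8))) := by
        field_simp
    _ = (Real.sqrt Real.pi)⁻¹ * (s ^ (-(3:ℝ)/2) * Real.exp (-(a/8))) := by
        rw [← Real.exp_add, show -(a/4) + a/8 = -(a/8) by ring]

lemma measurable_heatGx_comp (t y : ℝ) : Measurable (fun τ => heatGx (t - τ) y) := by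
  apply Measurable.mul
  · exact (((measurable_const.sub measurable_id).pow_const _).const_mul _).mul_const _
  · exact Measurable.exp ((measurable_const (a := -(y^2))).div
      ((measurable_const.sub measurable_id).const_mul 4))

lemma measurable_heatGxx_comp (t y : ℝ) : Measurable (fun τ => heatGxx (t - τ) y) := by
  apply Measurable.mul
  · apply Measurable.mul
    · exact ((measurable_const.sub measurable_id).pow_const _).const_mul _
    · exact Measurable.exp ((measurable_const (a := -(y^2))).div
        ((measurable_const.sub measurable_id).const_mul 4))
  · exact measurable_const.sub ((measurable_const (a := y^2)).div
      ((measurable_const.sub measurable_id).const_mul 2))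

lemma heatGx_abs_le {s t x : ℝ} (hs : 0 ≤ s) (hst : s ≤ t) (hx : 0 < x) :
    |heatGx s x| ≤ 1/(4*Real.sqrt Real.pi) * x * (4 * Real.sqrt t / (x^2/4)^2) := by
  have hπ : (0:ℝ) < Real.sqrt Real.pi := Real.sqrt_pos.2 Real.pi_pos
  have h1 : |heatGx s x| = 1/(4*Real.sqrt Real.pi) * x * (s ^ (-(3:ℝ)/2) * Real.exp (-(x^2/4)/s)) := by
    rw [heatGx, show -(x^2)/(4*s) = -(x^2/4)/s by ring]
    rw [abs_mul, abs_mul, abs_mul, abs_neg,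
      abs_of_nonneg (by positivity : (0:ℝ) ≤ 1/(4*Real.sqrt Real.pi)),
      abs_of_nonneg (Real.rpow_nonneg hs _), abs_of_nonneg (Real.exp_nonneg _),
      abs_of_pos hx]
    ring
  rw [h1]
  have h2 := f_le_const_aux (b := x^2/4) (by positivity) hs hst
  gcongr

/-- Pointwise bound `|∂ₓu(t,x)| ≤ C(x^{−1}1_{x≤1} + e^{−cx}1_{x>1}) sup|ψ|` for the spatial
derivative of the boundary-driven heat solution, with constants depending only on `T`. -/
theorem stmt6 (T : ℝ) (hT : 0 < T) :
    ∃ C > (0 : ℝ), ∃ c > (0 : ℝ), ∀ ψ : ℝ → ℝ, Measurable ψ → ∀ M : ℝ,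
      (∀ τ ∈ Set.Icc (0 : ℝ) T, |ψ τ| ≤ M) →
      ∀ t ∈ Set.Ioc (0 : ℝ) T, ∀ x : ℝ, 0 < x →
        |deriv (fun y => heatU ψ t y) x| ≤
          C * (if x ≤ 1 then x⁻¹ else Real.exp (-c * x)) * M := by
  refine ⟨48, by norm_num, 1/(16*T), by positivity, ?_⟩
  intro ψ hψ M hM t ht x hx
  obtain ⟨ht0, htT⟩ := ht
  have hM0 : 0 ≤ M := le_trans (abs_nonneg _) (hM 0 ⟨le_refl 0, hT.le⟩)
  have hπ : (0:ℝ) < Real.sqrt Real.pi := Real.sqrt_pos.2 Real.pi_pos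
  set μ := volume.restrict (Set.Ioc (0:ℝ) t) with hμ
  -- a.e. τ is in the open interval
  have hae : ∀ᵐ τ ∂μ, τ ∈ Set.Ioo 0 t := by
    have h1 : ∀ᵐ τ ∂μ, τ ∈ Set.Ioc 0 t := ae_restrict_mem measurableSet_Ioc
    have h2 : ∀ᵐ τ ∂μ, τ ≠ t := by
      have hz : μ {t} = 0 := by
        rw [hμ, Measure.restrict_apply (measurableSet_singleton t)]
        exact measure_mono_null Set.inter_subset_left (Real.volume_singleton)
      rw [ae_iff]
      simpa using hz
    filter_upwards [h1, h2] with τ hτ hτ'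
    exact ⟨hτ.1, lt_of_le_of_ne hτ.2 hτ'⟩
  -- membership in [0, T]
  have hsub : Set.Ioc (0:ℝ) t ⊆ Set.Icc 0 T := fun τ hτ => ⟨hτ.1.le, hτ.2.trans htT⟩
  -- integrability of F x
  have hF_int : Integrable (fun τ => heatGx (t - τ) x * ψ τ) μ := by
    apply integrableOn_of_bdd (((measurable_heatGx_comp t x)).mul hψ)
      (K := 1/(4*Real.sqrt Real.pi) * x * (4 * Real.sqrt t / (x^2/4)^2) * M)
    intro τ hτ
    rw [Pi.mul_apply, abs_mul]
    exact mul_le_mul (heatGx_abs_le (by linarith [hτ.2]) (by linarith [hτ.1]) hx)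
      (hM τ (hsub hτ)) (abs_nonneg _) (by positivity)
  -- dominating bound on the ball
  have h_bound : ∀ᵐ τ ∂μ, ∀ y ∈ Metric.ball x (x/2),
      ‖heatGxx (t - τ) y * ψ τ‖ ≤
        (M / Real.sqrt Real.pi) * ((t - τ) ^ (-(3:ℝ)/2) * Real.exp (-(x^2/32)/(t - τ))) := by
    filter_upwards [hae] with τ hτ
    intro y hy
    have hs : (0:ℝ) < t - τ := by linarith [hτ.2]
    have hyx : x/2 < y := by
      rw [Metric.mem_ball, Real.dist_eq, abs_sub_lt_iff] at hy
      linarith [hy.2]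
    have hy0 : 0 < y := lt_trans (by positivity) hyx
    have hexp : Real.exp (-(y^2/8)/(t-τ)) ≤ Real.exp (-(x^2/32)/(t-τ)) := by
      apply Real.exp_le_exp.2
      rw [neg_div, neg_div, neg_le_neg_iff]
      have hnum : x^2/32 ≤ y^2/8 := by nlinarith
      exact (div_le_div_iff_of_pos_right hs).2 hnum
    calc ‖heatGxx (t - τ) y * ψ τ‖ = |heatGxx (t - τ) y| * |ψ τ| := abs_mul _ _
      _ ≤ ((Real.sqrt Real.pi)⁻¹ * ((t-τ) ^ (-(3:ℝ)/2) * Real.exp (-(y^2/8)/(t-τ)))) * M :=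
          mul_le_mul (heatGxx_abs_le hs) (hM τ (hsub ⟨hτ.1, hτ.2.le⟩)) (abs_nonneg _)
            (by positivity)
      _ ≤ ((Real.sqrt Real.pi)⁻¹ * ((t-τ) ^ (-(3:ℝ)/2) * Real.exp (-(x^2/32)/(t-τ)))) * M := by
          gcongr
      _ = (M / Real.sqrt Real.pi) * ((t - τ) ^ (-(3:ℝ)/2) * Real.exp (-(x^2/32)/(t - τ))) := by
          ring
  have bound_int : Integrable (fun τ =>
      (M / Real.sqrt Real.pi) * ((t - τ) ^ (-(3:ℝ)/2) * Real.exp (-(x^2/32)/(t - τ)))) μ := by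
    apply integrableOn_of_bdd
      (K := (M / Real.sqrt Real.pi) * (4 * Real.sqrt t / (x^2/32)^2))
    · exact (((measurable_const.sub measurable_id).pow_const _).mul
        (Measurable.exp ((measurable_const (a := -(x^2/32))).div
          (measurable_const.sub measurable_id)))).const_mul _
    · intro τ hτ
      have hs : (0:ℝ) ≤ t - τ := by linarith [hτ.2]
      rw [abs_of_nonneg (by positivity)]
      exact mul_le_mul_of_nonneg_left
        (f_le_const_aux (by positivity) hs (by linarith [hτ.1])) (by positivity)
  -- differentiability
  have h_diff : ∀ᵐ τ ∂μ, ∀ y ∈ Metric.ball x (x/2),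
      HasDerivAt (fun y => heatGx (t - τ) y * ψ τ) (heatGxx (t - τ) y * ψ τ) y := by
    filter_upwards [hae] with τ hτ
    intro y _
    have hs : (0:ℝ) < t - τ := by linarith [hτ.2]
    exact (hasDerivAt_heatGx hs.ne' y).mul_const _
  have hF_meas : ∀ y : ℝ, AEStronglyMeasurable (fun τ => heatGx (t - τ) y * ψ τ) μ :=
    fun y => ((measurable_heatGx_comp t y).mul hψ).aestronglyMeasurable.restrict
  have hF'_meas : AEStronglyMeasurable (fun τ => heatGxx (t - τ) x * ψ τ) μ :=
    ((measurable_heatGxx_comp t x).mul hψ).aestronglyMeasurable.restrict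
  have key := (hasDerivAt_integral_of_dominated_loc_of_deriv_le (Metric.ball_mem_nhds x (half_pos hx))
    (Filter.Eventually.of_forall hF_meas) hF_int hF'_meas h_bound bound_int h_diff).2
  have hU : HasDerivAt (fun y => heatU ψ t y)
      (-2 * ∫ τ, heatGxx (t - τ) x * ψ τ ∂μ) x := by
    have hfe : (fun y => heatU ψ t y) = fun y => -2 * ∫ τ, heatGx (t - τ) y * ψ τ ∂μ := by
      funext y
      rw [heatU, intervalIntegral.integral_of_le ht0.le]
    rw [hfe]
    exact key.const_mul (-2)
  rw [hU.deriv]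
  -- sharper a.e. bound at the point x itself
  have h1π : 1 ≤ Real.sqrt Real.pi := by
    rw [show (1:ℝ) = Real.sqrt 1 by simp]
    exact Real.sqrt_le_sqrt (by linarith [Real.pi_gt_three])
  have hbnd2 : ∀ᵐ τ ∂μ, ‖heatGxx (t - τ) x * ψ τ‖ ≤
      (M / Real.sqrt Real.pi * Real.exp (-(x^2/(16*T)))) *
        ((t-τ) ^ (-(3:ℝ)/2) * Real.exp (-(x^2/16)/(t-τ))) := by
    filter_upwards [hae] with τ hτ
    have hs : (0:ℝ) < t - τ := by linarith [hτ.2]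
    have hsT : t - τ ≤ T := by linarith [hτ.1, htT]
    have hsplit : Real.exp (-(x^2/8)/(t-τ))
        = Real.exp (-(x^2/16)/(t-τ)) * Real.exp (-(x^2/16)/(t-τ)) := by
      rw [← Real.exp_add]; congr 1; ring
    have hTT : Real.exp (-(x^2/16)/(t-τ)) ≤ Real.exp (-(x^2/(16*T))) := by
      apply Real.exp_le_exp.2
      have h16 : (0:ℝ) < 16*(t-τ) := by linarith
      have h16' : 16*(t-τ) ≤ 16*T := by linarith
      have hd : x^2/(16*T) ≤ (x^2/16)/(t-τ) := by
        rw [div_div]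
        exact div_le_div_of_nonneg_left (sq_nonneg x) h16 h16'
      rw [neg_div]
      linarith
    calc ‖heatGxx (t - τ) x * ψ τ‖ = |heatGxx (t - τ) x| * |ψ τ| := abs_mul _ _
      _ ≤ ((Real.sqrt Real.pi)⁻¹ * ((t-τ) ^ (-(3:ℝ)/2) * Real.exp (-(x^2/8)/(t-τ)))) * M :=
          mul_le_mul (heatGxx_abs_le hs) (hM τ (hsub ⟨hτ.1, hτ.2.le⟩)) (abs_nonneg _)
            (by positivity)
      _ = ((Real.sqrt Real.pi)⁻¹ * M) * ((t-τ) ^ (-(3:ℝ)/2) *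
            (Real.exp (-(x^2/16)/(t-τ)) * Real.exp (-(x^2/16)/(t-τ)))) := by
          rw [hsplit]; ring
      _ ≤ ((Real.sqrt Real.pi)⁻¹ * M) * ((t-τ) ^ (-(3:ℝ)/2) *
            (Real.exp (-(x^2/16)/(t-τ)) * Real.exp (-(x^2/(16*T))))) := by
          have hrp : (0:ℝ) ≤ (t-τ) ^ (-(3:ℝ)/2) := Real.rpow_nonneg hs.le _
          have hc : (0:ℝ) ≤ (Real.sqrt Real.pi)⁻¹ * M := by positivity
          gcongr
      _ = (M / Real.sqrt Real.pi * Real.exp (-(x^2/(16*T)))) *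
            ((t-τ) ^ (-(3:ℝ)/2) * Real.exp (-(x^2/16)/(t-τ))) := by ring
  have hbnd2_int : Integrable (fun τ => (M / Real.sqrt Real.pi * Real.exp (-(x^2/(16*T)))) *
      ((t-τ) ^ (-(3:ℝ)/2) * Real.exp (-(x^2/16)/(t-τ)))) μ := by
    apply integrableOn_of_bdd
      (K := (M / Real.sqrt Real.pi * Real.exp (-(x^2/(16*T)))) * (4*Real.sqrt t/(x^2/16)^2))
    · exact (((measurable_const.sub measurable_id).pow_const _).mul
        (Measurable.exp ((measurable_const (a := -(x^2/16))).div
          (measurable_const.sub measurable_id)))).const_mul _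
    · intro τ hτ
      have hs : (0:ℝ) ≤ t - τ := by linarith [hτ.2]
      rw [abs_of_nonneg (by positivity)]
      exact mul_le_mul_of_nonneg_left
        (f_le_const_aux (by positivity) hs (by linarith [hτ.1])) (by positivity)
  have hIbound : |∫ τ, heatGxx (t - τ) x * ψ τ ∂μ| ≤
      ∫ τ, (M / Real.sqrt Real.pi * Real.exp (-(x^2/(16*T)))) *
        ((t-τ) ^ (-(3:ℝ)/2) * Real.exp (-(x^2/16)/(t-τ))) ∂μ := by
    rw [← Real.norm_eq_abs]
    exact MeasureTheory.norm_integral_le_of_norm_le hbnd2_int hbnd2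
  have hIeq : (∫ τ, (M / Real.sqrt Real.pi * Real.exp (-(x^2/(16*T)))) *
        ((t-τ) ^ (-(3:ℝ)/2) * Real.exp (-(x^2/16)/(t-τ))) ∂μ)
      = (M / Real.sqrt Real.pi * Real.exp (-(x^2/(16*T)))) *
        ∫ τ, ((t-τ) ^ (-(3:ℝ)/2) * Real.exp (-(x^2/16)/(t-τ))) ∂μ :=
    MeasureTheory.integral_const_mul _ _
  have hchange : (∫ τ, ((t-τ) ^ (-(3:ℝ)/2) * Real.exp (-(x^2/16)/(t-τ))) ∂μ)
      = ∫ s in Set.Ioc (0:ℝ) t, s ^ (-(3:ℝ)/2) * Real.exp (-(x^2/16)/s) := by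
    rw [hμ, ← intervalIntegral.integral_of_le ht0.le, ← intervalIntegral.integral_of_le ht0.le]
    have h := intervalIntegral.integral_comp_sub_left
      (f := fun s : ℝ => s ^ (-(3:ℝ)/2) * Real.exp (-(x^2/16)/s)) (a := 0) (b := t) t
    simpa using h
  have hkey := key_int (b := x^2/16) (by positivity) ht0
  have hsq : Real.sqrt (x^2/16) = x/4 := by
    rw [show x^2/16 = (x/4)^2 by ring, Real.sqrt_sq (by positivity : (0:ℝ) ≤ x/4)]
  have h64 : (6:ℝ) / (x/4) = 24/x := by
    field_simp
    ring
  have htot : |(-2 : ℝ) * ∫ τ, heatGxx (t - τ) x * ψ τ ∂μ| ≤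
      2 * ((M / Real.sqrt Real.pi * Real.exp (-(x^2/(16*T)))) * (24/x)) := by
    rw [abs_mul, show |(-2:ℝ)| = 2 by norm_num]
    apply mul_le_mul_of_nonneg_left _ (by norm_num)
    calc |∫ τ, heatGxx (t - τ) x * ψ τ ∂μ|
        ≤ (M / Real.sqrt Real.pi * Real.exp (-(x^2/(16*T)))) *
            ∫ τ, ((t-τ) ^ (-(3:ℝ)/2) * Real.exp (-(x^2/16)/(t-τ))) ∂μ := by
          rw [← hIeq]; exact hIbound
      _ ≤ (M / Real.sqrt Real.pi * Real.exp (-(x^2/(16*T)))) * (6 / Real.sqrt (x^2/16)) := by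
          apply mul_le_mul_of_nonneg_left _ (by positivity)
          rw [hchange]
          exact hkey
      _ = (M / Real.sqrt Real.pi * Real.exp (-(x^2/(16*T)))) * (24/x) := by
          rw [hsq, h64]
  have hMs : M / Real.sqrt Real.pi ≤ M := div_le_self hM0 h1π
  rcases le_or_gt x 1 with hx1 | hx1
  · rw [if_pos hx1]
    have hE1 : Real.exp (-(x^2/(16*T))) ≤ 1 := Real.exp_le_one_iff.2 (by
      have : (0:ℝ) ≤ x^2/(16*T) := by positivity
      linarith)
    refine htot.trans ?_
    calc 2 * ((M / Real.sqrt Real.pi * Real.exp (-(x^2/(16*T)))) * (24/x))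
        ≤ 2 * ((M * 1) * (24/x)) := by
          have h24x : (0:ℝ) ≤ 24/x := by positivity
          gcongr
      _ = 48 * x⁻¹ * M := by ring
  · rw [if_neg (not_le.2 hx1)]
    have hE2 : Real.exp (-(x^2/(16*T))) ≤ Real.exp (-(1/(16*T))*x) := by
      apply Real.exp_le_exp.2
      have h1 : x ≤ x^2 := by nlinarith
      have he : -(1/(16*T))*x = -(x/(16*T)) := by ring
      rw [he]
      have hd : x/(16*T) ≤ x^2/(16*T) := by gcongr
      linarith
    have h24 : 24/x ≤ 24 := by
      rw [div_le_iff₀ hx]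
      nlinarith
    refine htot.trans ?_
    calc 2 * ((M / Real.sqrt Real.pi * Real.exp (-(x^2/(16*T)))) * (24/x))
        ≤ 2 * ((M * Real.exp (-(1/(16*T))*x)) * 24) := by
          have hee : (0:ℝ) ≤ Real.exp (-(1/(16*T))*x) := Real.exp_nonneg _
          gcongr
      _ = 48 * Real.exp (-(1/(16*T)) * x) * M := by ring
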